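/- Let n ≥ 3. The girth of the graph ORTHO equals 3, and the girth of the graph VNL equals 3. -/

import Mathlib

/-- A matrix over `R = {0,-1} ⊆ ℤ` is normal: zero diagonal, entries `0` or `-1`. -/
def IsNormal {n : ℕ} (A : Matrix (Fin n) (Fin n) ℤ) : Prop :=
  (∀ i, A i i = 0) ∧ ∀ i j, A i j = 0 ∨ A i j = -1

/-- Tropical (max-plus) matrix product: `(A⊙B) i j = max_k (A i k + B k j)`. -/
noncomputable def tropMul {n : ℕ} (A B : Matrix (Fin n) (Fin n) ℤ) :
    Matrix (Fin n) (Fin n) ℤ :=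
  Matrix.of fun i j => sSup (Set.range fun k => A i k + B k j)

/-- Tropical sum: entrywise maximum. -/
def tropSum {n : ℕ} (A B : Matrix (Fin n) (Fin n) ℤ) : Matrix (Fin n) (Fin n) ℤ :=
  Matrix.of fun i j => max (A i j) (B i j)

/-- `A` is strictly normal: zero diagonal and all off-diagonal entries equal `-1`. -/
def IsStrictlyNormal {n : ℕ} (A : Matrix (Fin n) (Fin n) ℤ) : Prop :=
  (∀ i, A i i = 0) ∧ ∀ i j, i ≠ j → A i j = -1

/-- `A ∈ V(p;q)`: the `p`-th row and the `q`-th column of `A` are zero. -/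
def memV {n : ℕ} (p q : Fin n) (A : Matrix (Fin n) (Fin n) ℤ) : Prop :=
  ∀ i, A p i = 0 ∧ A i q = 0

/-- `A ∈ W(p;q)`: `A p i = 0` for `i ≠ q` and `A i q = 0` for `i ≠ p`. -/
def memW {n : ℕ} (p q : Fin n) (A : Matrix (Fin n) (Fin n) ℤ) : Prop :=
  (∀ i, i ≠ q → A p i = 0) ∧ (∀ i, i ≠ p → A i q = 0)

/-- Vertices of `ORTHO`: normal matrices that are neither strictly normal nor zero. -/
def OrthoVertex (n : ℕ) : Type :=
  {A : Matrix (Fin n) (Fin n) ℤ // IsNormal A ∧ ¬ IsStrictlyNormal A ∧ A ≠ 0}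

/-- The graph `ORTHO`: distinct vertices are adjacent iff mutually orthogonal. -/
noncomputable def orthoGraph (n : ℕ) : SimpleGraph (OrthoVertex n) where
  Adj X Y := X ≠ Y ∧ tropMul X.1 Y.1 = 0 ∧ tropMul Y.1 X.1 = 0
  symm := ⟨by
    rintro X Y ⟨hne, h1, h2⟩
    exact ⟨hne.symm, h2, h1⟩⟩
  loopless := ⟨fun X h => h.1 rfl⟩

/-- Vertices of `VNL`: nonzero normal matrices in some `V(p;q)` with `p ≠ q`. -/
def VNLVertex (n : ℕ) : Type :=
  {A : Matrix (Fin n) (Fin n) ℤ //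
    IsNormal A ∧ A ≠ 0 ∧ ∃ p q : Fin n, p ≠ q ∧ memV p q A}

/-- The graph `VNL`: distinct vertices `A, B` are adjacent iff there are `p, q`
with `A ∈ V(p;q)` and `B ∈ V(q;p)`. -/
def vnlGraph (n : ℕ) : SimpleGraph (VNLVertex n) where
  Adj X Y := X ≠ Y ∧ ∃ p q : Fin n, memV p q X.1 ∧ memV q p Y.1
  symm := ⟨by
    rintro X Y ⟨hne, p, q, h1, h2⟩
    exact ⟨hne.symm, q, p, h2, h1⟩⟩
  loopless := ⟨fun X h => h.1 rfl⟩

/-- Vertices of `WNL`: nonzero normal matrices in some `W(p;q)` with `p ≠ q`. -/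
def WNLVertex (n : ℕ) : Type :=
  {A : Matrix (Fin n) (Fin n) ℤ //
    IsNormal A ∧ A ≠ 0 ∧ ∃ p q : Fin n, p ≠ q ∧ memW p q A}

/-- The graph `WNL`: distinct vertices `A, B` are adjacent iff there are `k, m`
with one of the three `W`/`Z` sufficient conditions. -/
def wnlGraph (n : ℕ) : SimpleGraph (WNLVertex n) where
  Adj X Y := X ≠ Y ∧ ∃ k m : Fin n,
    (memW k m X.1 ∧ X.1 k m = 0 ∧ X.1 m k = 0 ∧ memW m k Y.1) ∨
    (memW k m X.1 ∧ X.1 m k = 0 ∧ memW m k Y.1 ∧ Y.1 k m = 0) ∨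
    (memW k m X.1 ∧ memW m k Y.1 ∧ Y.1 k m = 0 ∧ Y.1 m k = 0)
  symm := ⟨by
    rintro X Y ⟨hne, k, m, hc⟩
    exact ⟨hne.symm, m, k, by tauto⟩⟩
  loopless := ⟨fun X h => h.1 rfl⟩

section Aux

open SimpleGraph

lemma girth_eq_three_of_triangle {α : Type*} {G : SimpleGraph α} {a b c : α}
    (hab : G.Adj a b) (hbc : G.Adj b c) (hca : G.Adj c a) : G.girth = 3 := by
  set w : G.Walk a a := Walk.cons hab (Walk.cons hbc (Walk.cons hca Walk.nil)) with hw
  have hne_ab : a ≠ b := hab.ne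
  have hne_bc : b ≠ c := hbc.ne
  have hne_ca : c ≠ a := hca.ne
  have hcyc : w.IsCycle := by
    rw [hw, Walk.cons_isCycle_iff]
    constructor
    · rw [Walk.isPath_def]
      simp [hne_bc, hne_ca, hne_ab, Ne.symm hne_ca, Ne.symm hne_ab, Ne.symm hne_bc]
    · simp [Sym2.eq, Sym2.rel_iff', hne_ab, hne_bc, hne_ca, Ne.symm hne_ab, Ne.symm hne_bc,
        Ne.symm hne_ca, Prod.ext_iff]
  have hnac : ¬ G.IsAcyclic := fun h => h w hcyc
  have h3 : 3 ≤ G.girth := three_le_girth hnac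
  have hle : G.egirth ≤ 3 := by
    have := le_egirth.mp (le_refl G.egirth) a w hcyc
    simpa [hw] using this
  have : G.girth ≤ 3 := by
    have := ENat.toNat_le_toNat hle (by simp)
    simpa [girth] using this
  omega

lemma exists_ne_pair {n : ℕ} (hn : 3 ≤ n) (a b : Fin n) : ∃ i : Fin n, i ≠ a ∧ i ≠ b := by
  obtain ⟨x, hx1, hx2, hx3⟩ : ∃ x : ℕ, x < 3 ∧ x ≠ a.val ∧ x ≠ b.val := by
    have ha := a.isLt; have hb := b.isLt
    by_cases h0 : (0 : ℕ) = a.val ∨ (0 : ℕ) = b.val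
    · by_cases h1 : (1 : ℕ) = a.val ∨ (1 : ℕ) = b.val
      · exact ⟨2, by omega, by omega, by omega⟩
      · exact ⟨1, by omega, by tauto, by tauto⟩
    · exact ⟨0, by omega, by tauto, by tauto⟩
  exact ⟨⟨x, by omega⟩, fun h => hx2 (congrArg Fin.val h), fun h => hx3 (congrArg Fin.val h)⟩

/-- single-entry matrix with `-1` at `(r,c)`. -/
def Emat {n : ℕ} (r c : Fin n) : Matrix (Fin n) (Fin n) ℤ :=
  Matrix.of fun i j => if i = r ∧ j = c then -1 else 0

lemma Emat_apply {n : ℕ} (r c i j : Fin n) :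
    Emat r c i j = if i = r ∧ j = c then -1 else 0 := rfl

lemma Emat_le_zero {n : ℕ} (r c i j : Fin n) : Emat r c i j ≤ 0 := by
  rw [Emat_apply]; split <;> omega

lemma Emat_isNormal {n : ℕ} {r c : Fin n} (h : r ≠ c) : IsNormal (Emat r c) := by
  refine ⟨fun i => ?_, fun i j => ?_⟩
  · rw [Emat_apply]
    rcases eq_or_ne i r with rfl | hir
    · simp [h]
    · simp [hir]
  · rw [Emat_apply]; split <;> simp

lemma Emat_ne_zero {n : ℕ} (r c : Fin n) : Emat r c ≠ 0 := by
  intro h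
  have h2 : Emat r c r c = -1 := by rw [Emat_apply]; simp
  rw [h] at h2
  simp only [Matrix.zero_apply] at h2
  exact absurd h2 (by norm_num)

lemma Emat_not_strict {n : ℕ} (hn : 3 ≤ n) (r c : Fin n) : ¬ IsStrictlyNormal (Emat r c) := by
  rintro ⟨-, h⟩
  obtain ⟨i, hir, hic⟩ := exists_ne_pair hn r c
  obtain ⟨j, hji, hjc⟩ := exists_ne_pair hn i c
  have := h i j (Ne.symm hji)
  rw [Emat_apply] at this
  simp [hjc] at this

lemma Emat_ne {n : ℕ} {r c r' c' : Fin n} (h : (r, c) ≠ (r', c')) : Emat r c ≠ Emat r' c' := by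
  intro he
  have h1 : Emat r c r c = -1 := by rw [Emat_apply]; simp
  rw [he, Emat_apply] at h1
  by_cases hc : r = r' ∧ c = c'
  · exact h (by rw [hc.1, hc.2])
  · simp [hc] at h1

lemma tropMul_Emat {n : ℕ} {r c r' c' : Fin n} {k : Fin n} (hk1 : k ≠ c) (hk2 : k ≠ r') :
    tropMul (Emat r c) (Emat r' c') = 0 := by
  funext i j
  show sSup (Set.range fun m => Emat r c i m + Emat r' c' m j) = (0 : Matrix (Fin n) (Fin n) ℤ) i j
  have h1 : Emat r c i k = 0 := by rw [Emat_apply]; simp [hk1]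
  have h2 : Emat r' c' k j = 0 := by rw [Emat_apply]; simp [hk2]
  have hmem : (0 : ℤ) ∈ Set.range fun m => Emat r c i m + Emat r' c' m j :=
    ⟨k, by simp [h1, h2]⟩
  rw [Matrix.zero_apply]
  apply le_antisymm
  · apply csSup_le ⟨0, hmem⟩
    rintro x ⟨m, rfl⟩
    exact add_nonpos (Emat_le_zero r c i m) (Emat_le_zero r' c' m j)
  · exact le_csSup (Set.Finite.bddAbove (Set.finite_range _)) hmem

lemma memV_Emat {n : ℕ} {r c p q : Fin n} (hp : p ≠ r) (hq : q ≠ c) :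
    memV p q (Emat r c) := by
  intro i
  constructor <;> rw [Emat_apply] <;> simp [hp, hq]

end Aux
theorem stmt_17 (n : ℕ) (hn : 3 ≤ n) :
    (orthoGraph n).girth = 3 ∧ (vnlGraph n).girth = 3 := by
  set i0 : Fin n := ⟨0, by omega⟩ with hi0
  set i1 : Fin n := ⟨1, by omega⟩ with hi1
  set i2 : Fin n := ⟨2, by omega⟩ with hi2
  have h01 : i0 ≠ i1 := by simp [hi0, hi1, Fin.ext_iff]
  have h02 : i0 ≠ i2 := by simp [hi0, hi2, Fin.ext_iff]
  have h12 : i1 ≠ i2 := by simp [hi1, hi2, Fin.ext_iff]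
  have h10 : i1 ≠ i0 := Ne.symm h01
  have h20 : i2 ≠ i0 := Ne.symm h02
  have h21 : i2 ≠ i1 := Ne.symm h12
  have hA : IsNormal (Emat i0 i1) := Emat_isNormal h01
  have hB : IsNormal (Emat i0 i2) := Emat_isNormal h02
  have hC : IsNormal (Emat i1 i2) := Emat_isNormal h12
  have hAB : Emat i0 i1 ≠ Emat i0 i2 := Emat_ne (by simp [Prod.ext_iff, h12])
  have hBC : Emat i0 i2 ≠ Emat i1 i2 := Emat_ne (by simp [Prod.ext_iff, h01])
  have hCA : Emat i1 i2 ≠ Emat i0 i1 := Emat_ne (by simp [Prod.ext_iff, h10])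
  constructor
  · -- ORTHO
    let A : OrthoVertex n := ⟨Emat i0 i1, hA, Emat_not_strict hn _ _, Emat_ne_zero _ _⟩
    let B : OrthoVertex n := ⟨Emat i0 i2, hB, Emat_not_strict hn _ _, Emat_ne_zero _ _⟩
    let C : OrthoVertex n := ⟨Emat i1 i2, hC, Emat_not_strict hn _ _, Emat_ne_zero _ _⟩
    have hab : (orthoGraph n).Adj A B :=
      ⟨fun h => hAB (congrArg Subtype.val h),
        tropMul_Emat (k := i2) h21 h20, tropMul_Emat (k := i1) h12 h10⟩
    have hbc : (orthoGraph n).Adj B C :=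
      ⟨fun h => hBC (congrArg Subtype.val h),
        tropMul_Emat (k := i0) h02 h01, tropMul_Emat (k := i1) h12 h10⟩
    have hca : (orthoGraph n).Adj C A :=
      ⟨fun h => hCA (congrArg Subtype.val h),
        tropMul_Emat (k := i1) h12 h10, tropMul_Emat (k := i0) h01 h01⟩
    exact girth_eq_three_of_triangle hab hbc hca
  · -- VNL
    let A : VNLVertex n := ⟨Emat i0 i1, hA, Emat_ne_zero _ _,
      i1, i0, h10, memV_Emat h10 h01⟩
    let B : VNLVertex n := ⟨Emat i0 i2, hB, Emat_ne_zero _ _,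
      i1, i0, h10, memV_Emat h10 h02⟩
    let C : VNLVertex n := ⟨Emat i1 i2, hC, Emat_ne_zero _ _,
      i0, i1, h01, memV_Emat h01 h12⟩
    have hab : (vnlGraph n).Adj A B :=
      ⟨fun h => hAB (congrArg Subtype.val h), i1, i2,
        memV_Emat h10 h21, memV_Emat h20 h12⟩
    have hbc : (vnlGraph n).Adj B C :=
      ⟨fun h => hBC (congrArg Subtype.val h), i1, i0,
        memV_Emat h10 h02, memV_Emat h01 h12⟩
    have hca : (vnlGraph n).Adj C A :=
      ⟨fun h => hCA (congrArg Subtype.val h), i0, i1,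
        memV_Emat h01 h12, memV_Emat h10 h01⟩
    exact girth_eq_three_of_triangle hab hbc hca
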